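/- If X is continuous at every d_{0,k}, i.e. X(d_{0,k})=X(d_{0,k}⁻) for all 1≤k≤K, then X is constant on each interval of the partition of 𝕋 determined by the finite set {T^p d_{0,k} : 0≤p≤p_k, 1≤k≤K}; consequently P_X is purely atomic and its support has at most ∑_{1≤k≤K}(1+p_k) elements. -/

import Mathlib

open MeasureTheory Filter Topology

/-- The random series `X(x) = ∑_{n≥0} r_n(x) b(x + nα)` above the rotation by `α`,
where `r_n(x) = r(x) r(x+α) ⋯ r(x+(n−1)α)`; the circle is modelled as `ℝ` with
`1`-periodic data. -/
noncomputable def Xser (α : ℝ) (b r : ℝ → ℝ) (x : ℝ) : ℝ :=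
  ∑' n : ℕ, (∏ k ∈ Finset.range n, r (x + k * α)) * b (x + n * α)

/-- The arc `[d_i, d_{i+1})` of the circle (cyclically: the last arc is `[d_{N-1}, d_0 + 1)`),
viewed in `ℝ`. -/
def arc {N : ℕ} [NeZero N] (d : Fin N → ℝ) (i : Fin N) : Set ℝ :=
  if (i : ℕ) + 1 = N then Set.Ico (d i) (d (i + 1) + 1) else Set.Ico (d i) (d (i + 1))

namespace BremontAux


/-- integer periodicity -/
lemma per_int {f : ℝ → ℝ} (hf : Function.Periodic f 1) (x : ℝ) (m : ℤ) :
    f (x + m) = f x := by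
  have := hf.sub_int_mul_eq (x := x) (-m)
  simpa using this

/-- the unique representative of `w + ℤ` in `(x, x+1]` -/
noncomputable def rep (x w : ℝ) : ℝ := w + ((⌊x - w⌋ + 1 : ℤ) : ℝ)

lemma rep_gt (x w : ℝ) : x < rep x w := by
  have := Int.lt_floor_add_one (x - w)
  unfold rep; push_cast; linarith

lemma rep_le (x w : ℝ) : rep x w ≤ x + 1 := by
  have := Int.floor_le (x - w)
  unfold rep; push_cast; linarith

lemma rep_int (x w : ℝ) : ∃ m : ℤ, rep x w = w + m := ⟨⌊x - w⌋ + 1, rfl⟩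

lemma rep_unique {x w z : ℝ} (m : ℤ) (hz : z = w + m) (h1 : x < z) (h2 : z ≤ x + 1) :
    z = rep x w := by
  have hm : m = ⌊x - w⌋ + 1 := by
    have : ⌊x - w⌋ = m - 1 := by
      rw [Int.floor_eq_iff]
      constructor
      · push_cast; linarith [hz ▸ h2]
      · push_cast; linarith [hz ▸ h1]
    omega
  rw [hz, hm]; unfold rep; push_cast; ring

lemma fin_succ_val {n : ℕ} (i : Fin (n + 1)) (h : (i : ℕ) + 1 < n + 1) :
    ((i + 1 : Fin (n + 1)) : ℕ) = (i : ℕ) + 1 := by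
  have : i < Fin.last n := by
    rw [Fin.lt_def]; simp only [Fin.val_last]; omega
  exact Fin.val_add_one_of_lt this

lemma fin_last_succ {n : ℕ} (i : Fin (n + 1)) (h : (i : ℕ) + 1 = n + 1) :
    i + 1 = 0 := by
  have : i = Fin.last n := by apply Fin.ext; simp only [Fin.val_last]; omega
  rw [this, Fin.last_add_one]

lemma mem_arc_self {n : ℕ} (d : Fin (n + 1) → ℝ) (hd : StrictMono d)
    (hdmem : ∀ i, d i ∈ Set.Ico (0 : ℝ) 1) (i : Fin (n + 1)) : d i ∈ arc d i := by
  unfold arc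
  split_ifs with h
  · refine ⟨le_refl _, ?_⟩
    have h0 := hdmem (i + 1)
    have h1 := hdmem i
    simp only [Set.mem_Ico] at h0 h1
    linarith [h0.1, h1.2]
  · refine ⟨le_refl _, ?_⟩
    apply hd
    rw [Fin.lt_def, fin_succ_val i (by omega)]
    omega

lemma arc_subset {n : ℕ} (d : Fin (n + 1) → ℝ) (hd : StrictMono d)
    (hdmem : ∀ i, d i ∈ Set.Ico (0 : ℝ) 1) (i : Fin (n + 1)) :
    arc d i ⊆ Set.Ico (d 0) (d 0 + 1) := by
  intro u hu
  unfold arc at hu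
  have hd0 : d 0 ≤ d i := hd.monotone (Fin.zero_le i)
  split_ifs at hu with h
  · obtain ⟨h1, h2⟩ := hu
    rw [fin_last_succ i h] at h2
    exact ⟨le_trans hd0 h1, h2⟩
  · obtain ⟨h1, h2⟩ := hu
    refine ⟨le_trans hd0 h1, lt_of_lt_of_le h2 ?_⟩
    have := (hdmem (i + 1)).2
    have := (hdmem 0).1
    linarith


/-- membership in the translated point set `𝒟 + ℤ` -/
def isD {N : ℕ} (d : Fin N → ℝ) (z : ℝ) : Prop := ∃ (j : Fin N) (m : ℤ), z = d j + m

/-- Main reduction: an interval `[x,y]` avoiding `𝒟 + ℤ` on `(x,y]` fits in one arc mod 1. -/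
lemma reduce {n : ℕ} (d : Fin (n + 1) → ℝ) (hd : StrictMono d)
    (hdmem : ∀ i, d i ∈ Set.Ico (0 : ℝ) 1) (x y : ℝ) (hxy : x ≤ y)
    (hfree : ∀ z : ℝ, x < z → z ≤ y → ¬ isD d z) :
    ∃ (i : Fin (n + 1)) (m : ℤ), x - m ∈ arc d i ∧ y - m ∈ arc d i := by
  -- y < x + 1
  have hy1 : y < x + 1 := by
    by_contra h
    push_neg at h
    refine hfree (rep x (d 0)) (rep_gt x (d 0)) (le_trans (rep_le x (d 0)) h) ?_
    obtain ⟨m, hm⟩ := rep_int x (d 0)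
    exact ⟨0, m, hm⟩
  set m : ℤ := ⌊x - d 0⌋ with hm
  set x₀ : ℝ := x - m with hx₀
  have hx₀mem : d 0 ≤ x₀ ∧ x₀ < d 0 + 1 := by
    constructor
    · have := Int.floor_le (x - d 0); rw [hx₀, hm]; linarith
    · have := Int.lt_floor_add_one (x - d 0); rw [hx₀, hm]; push_cast; linarith
  classical
  set A : Finset (Fin (n + 1)) := Finset.univ.filter (fun i => d i ≤ x₀) with hA
  have hA0 : (0 : Fin (n + 1)) ∈ A := by
    simp only [hA, Finset.mem_filter, Finset.mem_univ, true_and]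
    exact hx₀mem.1
  have hAne : A.Nonempty := ⟨0, hA0⟩
  set i : Fin (n + 1) := A.max' hAne with hi
  have hdi : d i ≤ x₀ := by
    have := A.max'_mem hAne
    simp only [hA, Finset.mem_filter] at this
    exact this.2
  -- the right endpoint of arc i
  set E : ℝ := if (i : ℕ) + 1 = n + 1 then d (i + 1) + 1 else d (i + 1) with hE
  have harc : arc d i = Set.Ico (d i) E := by
    unfold arc
    rw [hE]
    split_ifs <;> rfl
  have hED : ∃ (j : Fin (n + 1)) (mm : ℤ), E = d j + mm := by
    rw [hE]; split_ifs with h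
    · exact ⟨i + 1, 1, by push_cast; ring⟩
    · exact ⟨i + 1, 0, by push_cast; ring⟩
  have hxE : x₀ < E := by
    rw [hE]; split_ifs with h
    · rw [fin_last_succ i h]; exact hx₀mem.2
    · by_contra hcon
      push_neg at hcon
      have hmem : i + 1 ∈ A := by
        simp only [hA, Finset.mem_filter, Finset.mem_univ, true_and]
        exact hcon
      have hle := A.le_max' _ hmem
      rw [← hi] at hle
      have hlt : i < i + 1 := by
        rw [Fin.lt_def, fin_succ_val i (by omega)]; omega
      exact absurd hle (not_le.mpr hlt)
  set y₀ : ℝ := y - m with hy₀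
  have hyE : y₀ < E := by
    by_contra hcon
    push_neg at hcon
    obtain ⟨j, mm, hj⟩ := hED
    refine hfree (E + m) ?_ ?_ ⟨j, mm + m, by rw [hj]; push_cast; ring⟩
    · have : x = x₀ + m := by rw [hx₀]; ring
      linarith
    · have : y = y₀ + m := by rw [hy₀]; ring
      linarith
  refine ⟨i, m, ?_, ?_⟩
  · rw [harc]; exact ⟨hdi, hxE⟩
  · rw [harc]
    refine ⟨le_trans hdi ?_, hyE⟩
    linarith

/-- a `1`-periodic function constant on arcs is constant on `𝒟+ℤ`-free intervals -/
lemma stepconst {n : ℕ} (d : Fin (n + 1) → ℝ) (hd : StrictMono d)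
    (hdmem : ∀ i, d i ∈ Set.Ico (0 : ℝ) 1) {g : ℝ → ℝ} (hgper : Function.Periodic g 1)
    (hgconst : ∀ i : Fin (n + 1), ∀ x ∈ arc d i, ∀ y ∈ arc d i, g x = g y)
    (x y : ℝ) (hxy : x ≤ y) (hfree : ∀ z : ℝ, x < z → z ≤ y → ¬ isD d z) :
    g x = g y := by
  obtain ⟨i, m, hx, hy⟩ := reduce d hd hdmem x y hxy hfree
  have ex : g (x - m) = g x := by
    have := per_int hgper (x - m) m
    simpa using this.symm
  have ey : g (y - m) = g y := by
    have := per_int hgper (y - m) m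
    simpa using this.symm
  rw [← ex, ← ey]
  exact hgconst i _ hx _ hy

/-- every value of such a function is attained at some `d i` -/
lemma valEq {n : ℕ} (d : Fin (n + 1) → ℝ) (hd : StrictMono d)
    (hdmem : ∀ i, d i ∈ Set.Ico (0 : ℝ) 1) {g : ℝ → ℝ} (hgper : Function.Periodic g 1)
    (hgconst : ∀ i : Fin (n + 1), ∀ x ∈ arc d i, ∀ y ∈ arc d i, g x = g y)
    (x : ℝ) : ∃ i : Fin (n + 1), g x = g (d i) := by
  obtain ⟨i, m, hx, -⟩ := reduce d hd hdmem x x le_rfl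
    (fun z h1 h2 => absurd (h1.trans_le h2) (lt_irrefl x))
  refine ⟨i, ?_⟩
  have ex : g (x - m) = g x := by
    have := per_int hgper (x - m) m
    simpa using this.symm
  rw [← ex]
  exact hgconst i _ hx _ (mem_arc_self d hd hdmem i)

/-- Telescoping: a function locally constant off a finite set `P ⊆ (x,y]` satisfies
`g y - g x = ∑ jumps over P`. -/
lemma tele (P : Finset ℝ) (g : ℝ → ℝ) : ∀ (x y : ℝ), x ≤ y → (↑P ⊆ Set.Ioc x y) →
    (∀ u v : ℝ, x ≤ u → u ≤ v → v ≤ y → (∀ z ∈ Set.Ioc u v, z ∉ (P : Set ℝ)) → g u = g v) →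
    g y - g x = ∑ z ∈ P, (g z - Function.leftLim g z) := by
  classical
  induction P using Finset.induction_on_max with
  | empty =>
    intro x y hxy _ hstep
    rw [hstep x y le_rfl hxy le_rfl (by simp)]
    simp
  | insert a s ha IH =>
    intro x y hxy hsub hstep
    have hax : a ∈ Set.Ioc x y := hsub (by simp)
    -- an intermediate point between all of s (and x) and a
    have hne : (insert x (s.image id)).Nonempty := ⟨x, by simp⟩
    set β : ℝ := (insert x (s.image id)).max' hne with hβ
    have hβa : β < a := by
      apply Finset.max'_lt_iff _ hne |>.mpr
      intro w hw
      simp only [Finset.mem_insert, Finset.mem_image, id] at hw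
      rcases hw with rfl | ⟨w', hw', rfl⟩
      · exact hax.1
      · exact ha _ hw'
    obtain ⟨w₀, hw₀1, hw₀2⟩ := exists_between hβa
    have hxβ : x ≤ β := Finset.le_max' _ x (by simp)
    have hxw₀ : x ≤ w₀ := le_trans hxβ hw₀1.le
    have hsβ : ∀ z ∈ s, z ≤ β := fun z hz => Finset.le_max' _ z (by simp [hz])
    -- g y = g a
    have hya : g a = g y := by
      apply hstep a y hax.1.le hax.2 le_rfl
      intro z hz hzP
      simp only [Finset.coe_insert, Set.mem_insert_iff, Finset.mem_coe] at hzP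
      rcases hzP with rfl | hzs
      · exact absurd hz.1 (lt_irrefl z)
      · exact absurd hz.1 (not_lt.mpr (le_trans (hsβ z hzs) (le_trans hw₀1.le hw₀2.le)))
    -- left limit of g at a equals g w₀
    have hconst : ∀ w ∈ Set.Ioo w₀ a, g w = g w₀ := by
      intro w hw
      symm
      apply hstep w₀ w hxw₀ hw.1.le (le_trans hw.2.le hax.2)
      intro z hz hzP
      simp only [Finset.coe_insert, Set.mem_insert_iff, Finset.mem_coe] at hzP
      rcases hzP with rfl | hzs
      · exact absurd (lt_of_le_of_lt hz.2 hw.2) (lt_irrefl z)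
      · exact absurd hz.1 (not_lt.mpr (le_trans (hsβ z hzs) hw₀1.le))
    have hll : Function.leftLim g a = g w₀ := by
      apply leftLim_eq_of_tendsto
      apply Tendsto.congr' _ tendsto_const_nhds
      filter_upwards [Ioo_mem_nhdsLT hw₀2]
        with w hw
      exact (hconst w hw).symm
    -- induction hypothesis on [x, w₀]
    have hIH : g w₀ - g x = ∑ z ∈ s, (g z - Function.leftLim g z) := by
      apply IH x w₀ hxw₀
      · intro z hz
        simp only [Finset.mem_coe] at hz
        have := hsub (by simp [hz] : z ∈ ↑(insert a s))
        exact ⟨this.1, le_trans (hsβ z hz) hw₀1.le⟩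
      · intro u v hu huv hv hfree
        apply hstep u v hu huv (le_trans hv (le_trans hw₀2.le hax.2))
        intro z hz hzP
        simp only [Finset.coe_insert, Set.mem_insert_iff, Finset.mem_coe] at hzP
        rcases hzP with rfl | hzs
        · have h1 : z ≤ w₀ := le_trans hz.2 hv
          exact absurd (lt_of_le_of_lt h1 hw₀2) (lt_irrefl z)
        · exact hfree z hz hzs
    rw [Finset.sum_insert (fun hc => (lt_irrefl a (ha a hc)))]
    rw [← hIH, ← hya, hll]
    ring

noncomputable def fB (α : ℝ) (b r : ℝ → ℝ) (n : ℕ) (x : ℝ) : ℝ :=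
  (∏ k ∈ Finset.range n, r (x + k * α)) * b (x + n * α)

noncomputable def SB (α : ℝ) (b r : ℝ → ℝ) (m : ℕ) (x : ℝ) : ℝ :=
  ∑ n ∈ Finset.range (m + 1), fB α b r n x

section Bounds
variable {α : ℝ} {b r : ℝ → ℝ} {ρ B : ℝ}
  (hρ0 : 0 < ρ) (hρ1 : ρ < 1) (hrρ : ∀ x, 0 < r x ∧ r x ≤ ρ) (hB : ∀ x, |b x| ≤ B)

include hρ0 hrρ in
lemma prod_r_bound (x : ℝ) (n : ℕ) :
    0 < (∏ k ∈ Finset.range n, r (x + k * α)) ∧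
      (∏ k ∈ Finset.range n, r (x + k * α)) ≤ ρ ^ n := by
  constructor
  · exact Finset.prod_pos fun k _ => (hrρ _).1
  · calc (∏ k ∈ Finset.range n, r (x + k * α)) ≤ ∏ k ∈ Finset.range n, ρ :=
          Finset.prod_le_prod (fun k _ => (hrρ _).1.le) (fun k _ => (hrρ _).2)
      _ = ρ ^ n := by rw [Finset.prod_const, Finset.card_range]

include hρ0 hrρ hB in
lemma fB_bound (n : ℕ) (x : ℝ) : |fB α b r n x| ≤ B * ρ ^ n := by
  obtain ⟨h1, h2⟩ := prod_r_bound hρ0 hrρ x n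
  rw [fB, abs_mul, abs_of_pos h1]
  calc (∏ k ∈ Finset.range n, r (x + k * α)) * |b (x + n * α)| ≤ ρ ^ n * B := by
        apply mul_le_mul h2 (hB _) (abs_nonneg _) (pow_nonneg hρ0.le n)
    _ = B * ρ ^ n := mul_comm _ _

include hρ0 hB in
lemma hB0 : 0 ≤ B := le_trans (abs_nonneg _) (hB 0)

include hρ0 hρ1 hrρ hB in
lemma fB_summable (x : ℝ) : Summable (fun n => fB α b r n x) := by
  apply Summable.of_norm_bounded
    ((summable_geometric_of_lt_one hρ0.le hρ1).mul_left B)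
  intro n
  simpa [Real.norm_eq_abs] using fB_bound hρ0 hrρ hB n x

lemma Xser_eq_tsum (x : ℝ) : Xser α b r x = ∑' n, fB α b r n x := rfl

include hρ0 hρ1 hrρ hB in
lemma tail_bound (m : ℕ) (x : ℝ) :
    |Xser α b r x - SB α b r m x| ≤ B * ρ ^ (m + 1) / (1 - ρ) := by
  have hsum := fB_summable hρ0 hρ1 hrρ hB (α := α) x
  have hsplit := hsum.sum_add_tsum_nat_add (m + 1)
  have hXS : Xser α b r x - SB α b r m x = ∑' n : ℕ, fB α b r (n + (m + 1)) x := by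
    rw [Xser_eq_tsum, SB, ← hsplit]; ring
  rw [hXS]
  have hg : HasSum (fun n : ℕ => B * ρ ^ (n + (m + 1))) (B * ρ ^ (m + 1) / (1 - ρ)) := by
    have h1 : HasSum (fun n : ℕ => ρ ^ n) (1 - ρ)⁻¹ :=
      hasSum_geometric_of_lt_one hρ0.le hρ1
    have h2 := h1.mul_left (B * ρ ^ (m + 1))
    have heq : (fun n : ℕ => B * ρ ^ (m + 1) * ρ ^ n) = (fun n : ℕ => B * ρ ^ (n + (m + 1))) := by
      funext n; rw [pow_add]; ring
    rw [heq, ← div_eq_mul_inv] at h2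
    exact h2
  have hbd : ∀ n : ℕ, ‖fB α b r (n + (m + 1)) x‖ ≤ B * ρ ^ (n + (m + 1)) := by
    intro n
    rw [Real.norm_eq_abs]
    exact fB_bound hρ0 hrρ hB (n + (m + 1)) x
  have := tsum_of_norm_bounded hg hbd
  rwa [Real.norm_eq_abs] at this

end Bounds

lemma fB_shift (α : ℝ) (b r : ℝ → ℝ) (n : ℕ) (x : ℝ) :
    fB α b r (n + 1) x = r x * fB α b r n (x + α) := by
  rw [fB, fB, Finset.prod_range_succ']
  have h1 : ∀ k : ℕ, x + (↑(k + 1) : ℝ) * α = x + α + k * α := by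
    intro k; push_cast; ring
  have h2 : x + (↑(0:ℕ) : ℝ) * α = x := by push_cast; ring
  have h3 : x + (↑(n + 1) : ℝ) * α = x + α + n * α := by push_cast; ring
  rw [h2, h3]
  rw [Finset.prod_congr rfl (fun k _ => by rw [h1 k])]
  ring

lemma SB_shift (α : ℝ) (b r : ℝ → ℝ) (m : ℕ) (x : ℝ) :
    SB α b r (m + 1) x = b x + r x * SB α b r m (x + α) := by
  rw [SB, Finset.sum_range_succ']
  have h0 : fB α b r 0 x = b x := by
    rw [fB]; simp
  rw [h0, SB, Finset.mul_sum]
  rw [Finset.sum_congr rfl (fun n _ => fB_shift α b r n x)]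
  ring

lemma fB_per {α : ℝ} {b r : ℝ → ℝ} (hbper : Function.Periodic b 1)
    (hrper : Function.Periodic r 1) (n : ℕ) : Function.Periodic (fB α b r n) 1 := by
  intro x
  rw [fB, fB]
  congr 1
  · apply Finset.prod_congr rfl
    intro k _
    have : x + 1 + k * α = (x + k * α) + 1 := by ring
    rw [this, hrper]
  · have : x + 1 + n * α = (x + n * α) + 1 := by ring
    rw [this, hbper]

lemma SB_per {α : ℝ} {b r : ℝ → ℝ} (hbper : Function.Periodic b 1)
    (hrper : Function.Periodic r 1) (m : ℕ) : Function.Periodic (SB α b r m) 1 := by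
  intro x
  apply Finset.sum_congr rfl
  intro n _
  exact fB_per hbper hrper n x

lemma Xser_per {α : ℝ} {b r : ℝ → ℝ} (hbper : Function.Periodic b 1)
    (hrper : Function.Periodic r 1) : Function.Periodic (Xser α b r) 1 := by
  intro x
  rw [Xser_eq_tsum, Xser_eq_tsum]
  exact tsum_congr fun n => fB_per hbper hrper n x

/-- partial sums are constant on intervals whose shifts avoid `𝒟 + ℤ` -/
lemma SB_step {n : ℕ} (d : Fin (n + 1) → ℝ) (hd : StrictMono d)
    (hdmem : ∀ i, d i ∈ Set.Ico (0 : ℝ) 1) {α : ℝ} {b r : ℝ → ℝ}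
    (hbper : Function.Periodic b 1) (hrper : Function.Periodic r 1)
    (hbconst : ∀ i : Fin (n + 1), ∀ x ∈ arc d i, ∀ y ∈ arc d i, b x = b y)
    (hrconst : ∀ i : Fin (n + 1), ∀ x ∈ arc d i, ∀ y ∈ arc d i, r x = r y)
    (m : ℕ) (x y : ℝ) (hxy : x ≤ y)
    (hfree : ∀ l : ℕ, l ≤ m → ∀ z : ℝ, x + l * α < z → z ≤ y + l * α → ¬ isD d z) :
    SB α b r m x = SB α b r m y := by
  apply Finset.sum_congr rfl
  intro j hj
  have hjm : j ≤ m := by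
    simp only [Finset.mem_range] at hj; omega
  rw [fB, fB]
  congr 1
  · apply Finset.prod_congr rfl
    intro k hk
    have hkm : (k : ℕ) ≤ m := by
      simp only [Finset.mem_range] at hk; omega
    exact stepconst d hd hdmem hrper (hrconst) _ _
      (by linarith [hxy]) (hfree k hkm)
  · exact stepconst d hd hdmem hbper (hbconst) _ _
      (by linarith [hxy]) (hfree j hjm)

section Gap
variable {n : ℕ} (d : Fin (n + 1) → ℝ) (hd : StrictMono d)
  (hdmem : ∀ i, d i ∈ Set.Ico (0 : ℝ) 1) {α : ℝ} {b r : ℝ → ℝ}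
  (hbper : Function.Periodic b 1) (hrper : Function.Periodic r 1)
  (hbconst : ∀ i : Fin (n + 1), ∀ x ∈ arc d i, ∀ y ∈ arc d i, b x = b y)
  (hrconst : ∀ i : Fin (n + 1), ∀ x ∈ arc d i, ∀ y ∈ arc d i, r x = r y)

include hd hdmem hbper hrper hbconst hrconst in
/-- locally to the left of any point, the partial sum `SB m` is constant -/
lemma gapS (m : ℕ) (z : ℝ) : ∃ w, w < z ∧
    (∀ u v, w ≤ u → u ≤ v → v < z → SB α b r m u = SB α b r m v) ∧
    ((∀ l : ℕ, l ≤ m → ¬ isD d (z + l * α)) →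
      ∀ u, w ≤ u → u ≤ z → SB α b r m u = SB α b r m z) := by
  classical
  set Bad : Finset ℝ :=
    (Finset.univ : Finset (Fin (n + 1) × Fin (m + 1))).image
      (fun q => rep (z - 1) (d q.1 - (q.2 : ℕ) * α)) with hBad
  set W : Finset ℝ := insert (z - 1) (Bad.filter (· < z)) with hW
  have hWne : W.Nonempty := ⟨z - 1, by simp [hW]⟩
  set w₀ : ℝ := W.max' hWne with hw₀
  have hw₀z : w₀ < z := by
    rw [hw₀]
    apply (Finset.max'_lt_iff _ hWne).mpr
    intro t ht
    rw [hW, Finset.mem_insert] at ht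
    rcases ht with rfl | ht
    · linarith
    · exact (Finset.mem_filter.mp ht).2
  obtain ⟨w, hww₀, hwz⟩ := exists_between hw₀z
  have hz1 : z - 1 ≤ w₀ := Finset.le_max' _ _ (by simp [hW])
  -- main step property
  have key : ∀ u v, w ≤ u → u ≤ v → v ≤ z →
      (v = z → (∀ l : ℕ, l ≤ m → ¬ isD d (z + l * α))) →
      SB α b r m u = SB α b r m v := by
    intro u v hu huv hvz hcase
    apply SB_step d hd hdmem hbper hrper hbconst hrconst m u v huv
    intro l hl zz h1 h2 hDzz
    obtain ⟨j, my, hjm⟩ := hDzz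
    set t : ℝ := zz - l * α with htdef
    have ht1 : u < t := by rw [htdef]; linarith
    have ht2 : t ≤ v := by rw [htdef]; linarith
    have htrep : t = rep (z - 1) (d j - l * α) := by
      apply rep_unique my
      · rw [htdef, hjm]; ring
      · calc z - 1 ≤ w₀ := hz1
          _ < w := hww₀
          _ ≤ u := hu
          _ < t := ht1
      · calc t ≤ v := ht2
          _ ≤ z := hvz
          _ = z - 1 + 1 := by ring
    have htBad : t ∈ Bad := by
      rw [hBad, Finset.mem_image]
      exact ⟨(j, ⟨l, by omega⟩), Finset.mem_univ _, htrep.symm⟩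
    rcases lt_or_eq_of_le (le_trans ht2 hvz) with htz | htz
    · have : t ∈ W := by
        rw [hW, Finset.mem_insert]
        right
        exact Finset.mem_filter.mpr ⟨htBad, htz⟩
      have := Finset.le_max' W t this
      rw [← hw₀] at this
      linarith
    · -- t = z : contradiction with the no-hit hypothesis
      have hvzz : v = z := le_antisymm hvz (htz ▸ ht2)
      apply hcase hvzz l hl
      have : z + l * α = zz := by rw [← htz, htdef]; ring
      exact ⟨j, my, by rw [this, hjm]⟩
  refine ⟨w, hwz, ?_, ?_⟩
  · intro u v hu huv hv
    exact key u v hu huv hv.le (fun he => absurd he (by intro h; exact absurd (h ▸ hv) (lt_irrefl z)))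
  · intro hnohit u hu huz
    exact key u z hu huz le_rfl (fun _ => hnohit)

include hd hdmem hbper hrper hbconst hrconst in
/-- the left limit of `SB m` is eventually attained -/
lemma leftS (m : ℕ) (z : ℝ) :
    ∀ᶠ w in 𝓝[<] z, SB α b r m w = Function.leftLim (SB α b r m) z := by
  obtain ⟨w, hwz, hconst, -⟩ := gapS d hd hdmem hbper hrper hbconst hrconst m z
  obtain ⟨w₁, hw₁, hw₁z⟩ := exists_between hwz
  have hval : ∀ u ∈ Set.Ioo w z, SB α b r m u = SB α b r m w₁ := by
    intro u hu
    rcases le_total u w₁ with h | h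
    · exact hconst u w₁ hu.1.le h hw₁z
    · exact (hconst w₁ u hw₁.le h hu.2).symm
  have hll : Function.leftLim (SB α b r m) z = SB α b r m w₁ := by
    apply leftLim_eq_of_tendsto
    apply Tendsto.congr' _ tendsto_const_nhds
    filter_upwards [Ioo_mem_nhdsLT hwz] with u hu
    exact (hval u hu).symm
  rw [hll]
  filter_upwards [Ioo_mem_nhdsLT hwz] with u hu
  exact hval u hu

include hd hdmem hbper hrper hbconst hrconst in
lemma tendS (m : ℕ) (z : ℝ) :
    Tendsto (SB α b r m) (𝓝[<] z) (𝓝 (Function.leftLim (SB α b r m) z)) := by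
  apply Tendsto.congr' _ tendsto_const_nhds
  filter_upwards [leftS d hd hdmem hbper hrper hbconst hrconst m z] with u hu
  exact hu.symm

include hd hdmem hbper hrper hbconst hrconst in
/-- if no shift of `z` hits `𝒟+ℤ` up to level `m`, the jump of `SB m` at `z` vanishes -/
lemma jumpS_zero (m : ℕ) (z : ℝ) (hnohit : ∀ l : ℕ, l ≤ m → ¬ isD d (z + l * α)) :
    SB α b r m z - Function.leftLim (SB α b r m) z = 0 := by
  obtain ⟨w, hwz, hconst, hext⟩ := gapS d hd hdmem hbper hrper hbconst hrconst m z
  obtain ⟨w₁, hw₁, hw₁z⟩ := exists_between hwz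
  have h1 : SB α b r m w₁ = SB α b r m z := hext hnohit w₁ hw₁.le hw₁z.le
  have hll : Function.leftLim (SB α b r m) z = SB α b r m w₁ := by
    apply leftLim_eq_of_tendsto
    apply Tendsto.congr' _ tendsto_const_nhds
    filter_upwards [Ioo_mem_nhdsLT hwz] with u hu
    rcases le_total u w₁ with h | h
    · exact (hconst u w₁ hu.1.le h hw₁z).symm
    · exact (hconst w₁ u hw₁.le h hu.2)
  rw [hll, h1]
  ring

include hd hdmem hbper hrper hbconst hrconst in
/-- locally to the left of a non-`𝒟` point, `b` and `r` are frozen -/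
lemma gapBR (z : ℝ) (hz : ¬ isD d z) :
    ∀ᶠ w in 𝓝[<] z, b w = b z ∧ r w = r z := by
  classical
  set Bad : Finset ℝ :=
    (Finset.univ : Finset (Fin (n + 1))).image (fun j => rep (z - 1) (d j)) with hBad
  set W : Finset ℝ := insert (z - 1) (Bad.filter (· < z)) with hW
  have hWne : W.Nonempty := ⟨z - 1, by simp [hW]⟩
  set w₀ : ℝ := W.max' hWne with hw₀
  have hw₀z : w₀ < z := by
    rw [hw₀]
    apply (Finset.max'_lt_iff _ hWne).mpr
    intro t ht
    rw [hW, Finset.mem_insert] at ht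
    rcases ht with rfl | ht
    · linarith
    · exact (Finset.mem_filter.mp ht).2
  have hz1 : z - 1 ≤ w₀ := Finset.le_max' _ _ (by simp [hW])
  filter_upwards [Ioo_mem_nhdsLT hw₀z] with u hu
  have key : ∀ zz : ℝ, u < zz → zz ≤ z → ¬ isD d zz := by
    intro zz h1 h2 hDzz
    obtain ⟨j, my, hjm⟩ := hDzz
    have hzrep : zz = rep (z - 1) (d j) := by
      apply rep_unique my hjm
      · linarith [hu.1]
      · linarith
    have hzBad : zz ∈ Bad := by
      rw [hBad, Finset.mem_image]
      exact ⟨j, Finset.mem_univ _, hzrep.symm⟩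
    have hzzz : zz < z := by
      rcases lt_or_eq_of_le h2 with h | h
      · exact h
      · exact absurd (h ▸ ⟨j, my, hjm⟩) hz
    have : zz ∈ W := by
      rw [hW, Finset.mem_insert]; right
      exact Finset.mem_filter.mpr ⟨hzBad, hzzz⟩
    have := Finset.le_max' W zz this
    rw [← hw₀] at this
    linarith [hu.1]
  constructor
  · exact stepconst d hd hdmem hbper hbconst u z hu.2.le key
  · exact stepconst d hd hdmem hrper hrconst u z hu.2.le key

include hd hdmem hbper hrper hbconst hrconst in
/-- single-step jump propagation -/
lemma jump_prop (m : ℕ) (z : ℝ) (hz : ¬ isD d z) :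
    SB α b r (m + 1) z - Function.leftLim (SB α b r (m + 1)) z =
      r z * (SB α b r m (z + α) - Function.leftLim (SB α b r m) (z + α)) := by
  have hshift : Tendsto (fun w : ℝ => w + α) (𝓝[<] z) (𝓝[<] (z + α)) := by
    rw [tendsto_nhdsWithin_iff]
    constructor
    · exact tendsto_nhdsWithin_of_tendsto_nhds ((continuous_add_right α).tendsto z)
    · filter_upwards [eventually_mem_nhdsWithin] with w hw
      exact add_lt_add_left hw α
  have hcomp : Tendsto (fun w : ℝ => SB α b r m (w + α)) (𝓝[<] z)
      (𝓝 (Function.leftLim (SB α b r m) (z + α))) :=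
    (tendS d hd hdmem hbper hrper hbconst hrconst m (z + α)).comp hshift
  have hT : Tendsto (SB α b r (m + 1)) (𝓝[<] z)
      (𝓝 (b z + r z * Function.leftLim (SB α b r m) (z + α))) := by
    apply Tendsto.congr' _ (tendsto_const_nhds.add (tendsto_const_nhds.mul hcomp))
    filter_upwards [gapBR d hd hdmem hbper hrper hbconst hrconst z hz] with w hw
    rw [SB_shift, hw.1, hw.2]
  have hll : Function.leftLim (SB α b r (m + 1)) z =
      b z + r z * Function.leftLim (SB α b r m) (z + α) :=
    leftLim_eq_of_tendsto hT
  rw [hll, SB_shift]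
  ring

include hd hdmem hbper hrper hbconst hrconst in
/-- iterated jump propagation -/
lemma jump_prop_iter : ∀ (l₀ m' : ℕ) (z : ℝ), (∀ l : ℕ, l < l₀ → ¬ isD d (z + l * α)) →
    SB α b r (m' + l₀) z - Function.leftLim (SB α b r (m' + l₀)) z =
      (∏ k ∈ Finset.range l₀, r (z + k * α)) *
        (SB α b r m' (z + l₀ * α) - Function.leftLim (SB α b r m') (z + l₀ * α)) := by
  intro l₀
  induction l₀ with
  | zero =>
    intro m' z _
    norm_num
  | succ l₀ IH =>
    intro m' z hfree
    have hz : ¬ isD d z := by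
      have := hfree 0 (by omega)
      simpa using this
    have hmm : m' + (l₀ + 1) = (m' + l₀) + 1 := by omega
    rw [hmm]
    have h1 : SB α b r ((m' + l₀) + 1) z - Function.leftLim (SB α b r ((m' + l₀) + 1)) z =
        r z * (SB α b r (m' + l₀) (z + α) - Function.leftLim (SB α b r (m' + l₀)) (z + α)) :=
      jump_prop d hd hdmem hbper hrper hbconst hrconst (m' + l₀) z hz
    have h2 := IH m' (z + α) (by
      intro l hl
      have := hfree (l + 1) (by omega)
      have he : z + (↑(l + 1) : ℝ) * α = z + α + l * α := by push_cast; ring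
      rwa [he] at this)
    rw [h1, h2]
    have he1 : z + α + l₀ * α = z + (↑(l₀ + 1) : ℝ) * α := by push_cast; ring
    have he2 : r z * ∏ k ∈ Finset.range l₀, r (z + α + k * α) =
        ∏ k ∈ Finset.range (l₀ + 1), r (z + k * α) := by
      rw [Finset.prod_range_succ']
      have h0 : z + (↑(0:ℕ) : ℝ) * α = z := by push_cast; ring
      rw [h0]
      have hpc : ∀ k ∈ Finset.range l₀, r (z + (↑(k + 1) : ℝ) * α) = r (z + α + k * α) :=
        fun k _ => congrArg r (by push_cast; ring)
      rw [Finset.prod_congr rfl hpc]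
      ring
    rw [← he2, he1]
    ring
end Gap

lemma irr_int {α : ℝ} (hirr : Irrational α) (p m : ℤ) (h : (p : ℝ) * α + m = 0) :
    p = 0 ∧ m = 0 := by
  by_cases hp : p = 0
  · subst hp
    constructor
    · rfl
    · have : (m : ℝ) = 0 := by push_cast at h; linarith
      exact_mod_cast this
  · exfalso
    apply hirr
    refine ⟨(-m : ℚ) / (p : ℚ), ?_⟩
    have hpne : (p : ℝ) ≠ 0 := Int.cast_ne_zero.mpr hp
    push_cast
    field_simp
    linarith

lemma irr_nat {α : ℝ} (hirr : Irrational α) (p q : ℕ) (m m' : ℤ)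
    (h : (p : ℝ) * α + m = (q : ℝ) * α + m') : p = q ∧ m = m' := by
  have h2 : ((p : ℤ) - q : ℤ) * α + ((m - m' : ℤ) : ℝ) = 0 := by push_cast; push_cast at h; linarith
  have := irr_int hirr ((p : ℤ) - q) (m - m') (by push_cast; push_cast at h2; linarith)
  omega

section Chains
variable {n K : ℕ} {α : ℝ} (hirr : Irrational α)
  (d : Fin (n + 1) → ℝ)
  (mk : Fin K → ℕ) (c : (k : Fin K) → Fin (mk k + 1) → Fin (n + 1)) (pk : Fin K → ℕ)
  (hchain : ∀ k : Fin K, ∀ i i' : Fin (mk k + 1),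
    i ≤ i' ↔ ∃ p : ℕ, ∃ m : ℤ, d (c k i') = d (c k i) + p * α + m)
  (hpk : ∀ k : Fin K, ∃ m : ℤ,
    d (c k (Fin.last (mk k))) = d (c k 0) + (pk k) * α + m)

include hirr hchain hpk in
/-- the first visit of the forward orbit of a non-grid point to `𝒟+ℤ` is at a chain bottom -/
lemma class_bottom (z : ℝ)
    (hzgrid : ¬ ∃ k : Fin K, ∃ p : ℕ, p ≤ pk k ∧ ∃ m : ℤ, z = d (c k 0) + p * α + m)
    (hpart : ∀ j : Fin (n + 1), ∃! q : (Σ k : Fin K, Fin (mk k + 1)), c q.1 q.2 = j)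
    (l₀ : ℕ) (hhit : isD d (z + l₀ * α)) (hmin : ∀ l : ℕ, l < l₀ → ¬ isD d (z + l * α)) :
    ∃ (k : Fin K) (m : ℤ), z + l₀ * α = d (c k 0) + m := by
  obtain ⟨j, M₁, hj⟩ := hhit
  obtain ⟨⟨k, i⟩, hki, -⟩ := hpart j
  simp only at hki
  obtain ⟨p, M₂, hp⟩ := (hchain k 0 i).mp (Fin.zero_le i)
  -- p ≤ pk k
  obtain ⟨p', M₃, hp'⟩ := (hchain k i (Fin.last (mk k))).mp (Fin.le_last i)
  obtain ⟨M₄, hp4⟩ := hpk k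
  have hple : p ≤ pk k := by
    have hcomb : ((pk k : ℕ) : ℝ) * α + (M₄ : ℝ) = ((p + p' : ℕ) : ℝ) * α + ((M₂ + M₃ : ℤ) : ℝ) := by
      push_cast
      have := hp4
      rw [hp', hp] at this
      linarith
    have := irr_nat hirr (pk k) (p + p') M₄ (M₂ + M₃) hcomb
    omega
  rcases le_or_gt p l₀ with hcase | hcase
  · -- subtract p steps
    have heq : z + ((l₀ - p : ℕ) : ℝ) * α = d (c k 0) + ((M₁ + M₂ : ℤ) : ℝ) := by
      have hdj : d j = d (c k 0) + (p : ℝ) * α + (M₂ : ℝ) := by rw [← hki]; exact hp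
      have h1 : z + (l₀ : ℝ) * α = d (c k 0) + (p : ℝ) * α + (M₂ : ℝ) + (M₁ : ℝ) := by
        rw [hj, hdj]
      rw [Nat.cast_sub hcase]
      push_cast
      linarith
    rcases Nat.eq_zero_or_pos p with hp0 | hppos
    · subst hp0
      refine ⟨k, M₁ + M₂, ?_⟩
      have : l₀ - 0 = l₀ := by omega
      rw [← this]  -- be careful
      exact_mod_cast heq
    · exfalso
      apply hmin (l₀ - p) (by omega)
      exact ⟨c k 0, M₁ + M₂, heq⟩
  · -- z itself would be a grid point
    exfalso
    apply hzgrid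
    refine ⟨k, p - l₀, by omega, M₁ + M₂, ?_⟩
    have hdj : d j = d (c k 0) + (p : ℝ) * α + (M₂ : ℝ) := by rw [← hki]; exact hp
    have h1 : z + (l₀ : ℝ) * α = d (c k 0) + (p : ℝ) * α + (M₂ : ℝ) + (M₁ : ℝ) := by
      rw [hj, hdj]
    rw [Nat.cast_sub hcase.le]
    push_cast
    push_cast at h1
    linarith
end Chains


-- delegating wrappers with fully explicit signatures
lemma prod_r_bound' {α : ℝ} {b r : ℝ → ℝ} {ρ B : ℝ} (hρ0 : 0 < ρ)
    (hrρ : ∀ x, 0 < r x ∧ r x ≤ ρ) (x : ℝ) (n : ℕ) :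
    0 < (∏ k ∈ Finset.range n, r (x + k * α)) ∧
      (∏ k ∈ Finset.range n, r (x + k * α)) ≤ ρ ^ n :=
  prod_r_bound hρ0 hrρ x n
lemma tail_bound' {α : ℝ} {b r : ℝ → ℝ} {ρ B : ℝ} (hρ0 : 0 < ρ) (hρ1 : ρ < 1)
    (hrρ : ∀ x, 0 < r x ∧ r x ≤ ρ) (hB : ∀ x, |b x| ≤ B) (m : ℕ) (x : ℝ) :
    |Xser α b r x - SB α b r m x| ≤ B * ρ ^ (m + 1) / (1 - ρ) :=
  tail_bound hρ0 hρ1 hrρ hB m x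
lemma fB_summable' {α : ℝ} {b r : ℝ → ℝ} {ρ B : ℝ} (hρ0 : 0 < ρ) (hρ1 : ρ < 1)
    (hrρ : ∀ x, 0 < r x ∧ r x ≤ ρ) (hB : ∀ x, |b x| ≤ B) (x : ℝ) :
    Summable (fun n => fB α b r n x) :=
  fB_summable hρ0 hρ1 hrρ hB x
lemma Xser_per' {α : ℝ} {b r : ℝ → ℝ} (hbper : Function.Periodic b 1)
    (hrper : Function.Periodic r 1) : Function.Periodic (Xser α b r) 1 :=
  Xser_per hbper hrper
lemma leftS' {n : ℕ} (d : Fin (n + 1) → ℝ) (hd : StrictMono d)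
    (hdmem : ∀ i, d i ∈ Set.Ico (0 : ℝ) 1) {α : ℝ} {b r : ℝ → ℝ}
    (hbper : Function.Periodic b 1) (hrper : Function.Periodic r 1)
    (hbconst : ∀ i : Fin (n + 1), ∀ x ∈ arc d i, ∀ y ∈ arc d i, b x = b y)
    (hrconst : ∀ i : Fin (n + 1), ∀ x ∈ arc d i, ∀ y ∈ arc d i, r x = r y) (m : ℕ) (z : ℝ) :
    ∀ᶠ w in 𝓝[<] z, SB α b r m w = Function.leftLim (SB α b r m) z :=
  leftS d hd hdmem hbper hrper hbconst hrconst m z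
lemma jumpS_zero' {n : ℕ} (d : Fin (n + 1) → ℝ) (hd : StrictMono d)
    (hdmem : ∀ i, d i ∈ Set.Ico (0 : ℝ) 1) {α : ℝ} {b r : ℝ → ℝ}
    (hbper : Function.Periodic b 1) (hrper : Function.Periodic r 1)
    (hbconst : ∀ i : Fin (n + 1), ∀ x ∈ arc d i, ∀ y ∈ arc d i, b x = b y)
    (hrconst : ∀ i : Fin (n + 1), ∀ x ∈ arc d i, ∀ y ∈ arc d i, r x = r y)
    (m : ℕ) (z : ℝ) (hnohit : ∀ l : ℕ, l ≤ m → ¬ isD d (z + l * α)) :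
    SB α b r m z - Function.leftLim (SB α b r m) z = 0 :=
  jumpS_zero d hd hdmem hbper hrper hbconst hrconst m z hnohit
lemma jump_prop_iter' {n : ℕ} (d : Fin (n + 1) → ℝ) (hd : StrictMono d)
    (hdmem : ∀ i, d i ∈ Set.Ico (0 : ℝ) 1) {α : ℝ} {b r : ℝ → ℝ}
    (hbper : Function.Periodic b 1) (hrper : Function.Periodic r 1)
    (hbconst : ∀ i : Fin (n + 1), ∀ x ∈ arc d i, ∀ y ∈ arc d i, b x = b y)
    (hrconst : ∀ i : Fin (n + 1), ∀ x ∈ arc d i, ∀ y ∈ arc d i, r x = r y) :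
    ∀ (l₀ m' : ℕ) (z : ℝ), (∀ l : ℕ, l < l₀ → ¬ isD d (z + l * α)) →
    SB α b r (m' + l₀) z - Function.leftLim (SB α b r (m' + l₀)) z =
      (∏ k ∈ Finset.range l₀, r (z + k * α)) *
        (SB α b r m' (z + l₀ * α) - Function.leftLim (SB α b r m') (z + l₀ * α)) :=
  jump_prop_iter d hd hdmem hbper hrper hbconst hrconst
lemma SB_step' {n : ℕ} (d : Fin (n + 1) → ℝ) (hd : StrictMono d)
    (hdmem : ∀ i, d i ∈ Set.Ico (0 : ℝ) 1) {α : ℝ} {b r : ℝ → ℝ}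
    (hbper : Function.Periodic b 1) (hrper : Function.Periodic r 1)
    (hbconst : ∀ i : Fin (n + 1), ∀ x ∈ arc d i, ∀ y ∈ arc d i, b x = b y)
    (hrconst : ∀ i : Fin (n + 1), ∀ x ∈ arc d i, ∀ y ∈ arc d i, r x = r y)
    (m : ℕ) (x y : ℝ) (hxy : x ≤ y)
    (hfree : ∀ l : ℕ, l ≤ m → ∀ z : ℝ, x + l * α < z → z ≤ y + l * α → ¬ isD d z) :
    SB α b r m x = SB α b r m y :=
  SB_step d hd hdmem hbper hrper hbconst hrconst m x y hxy hfree
lemma class_bottom' {n K : ℕ} {α : ℝ} (hirr : Irrational α) (d : Fin (n + 1) → ℝ)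
    (mk : Fin K → ℕ) (c : (k : Fin K) → Fin (mk k + 1) → Fin (n + 1)) (pk : Fin K → ℕ)
    (hchain : ∀ k : Fin K, ∀ i i' : Fin (mk k + 1),
      i ≤ i' ↔ ∃ p : ℕ, ∃ m : ℤ, d (c k i') = d (c k i) + p * α + m)
    (hpk : ∀ k : Fin K, ∃ m : ℤ,
      d (c k (Fin.last (mk k))) = d (c k 0) + (pk k) * α + m)
    (z : ℝ)
    (hzgrid : ¬ ∃ k : Fin K, ∃ p : ℕ, p ≤ pk k ∧ ∃ m : ℤ, z = d (c k 0) + p * α + m)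
    (hpart : ∀ j : Fin (n + 1), ∃! q : (Σ k : Fin K, Fin (mk k + 1)), c q.1 q.2 = j)
    (l₀ : ℕ) (hhit : isD d (z + l₀ * α)) (hmin : ∀ l : ℕ, l < l₀ → ¬ isD d (z + l * α)) :
    ∃ (k : Fin K) (m : ℤ), z + l₀ * α = d (c k 0) + m :=
  class_bottom hirr d mk c pk hchain hpk z hzgrid hpart l₀ hhit hmin

section All
variable {n K : ℕ} {α : ℝ} (hirr : Irrational α)
  (d : Fin (n + 1) → ℝ) (hd : StrictMono d)
  (hdmem : ∀ i, d i ∈ Set.Ico (0 : ℝ) 1) {b r : ℝ → ℝ}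
  (hbper : Function.Periodic b 1) (hrper : Function.Periodic r 1)
  (hbconst : ∀ i : Fin (n + 1), ∀ x ∈ arc d i, ∀ y ∈ arc d i, b x = b y)
  (hrconst : ∀ i : Fin (n + 1), ∀ x ∈ arc d i, ∀ y ∈ arc d i, r x = r y)
  {ρ B : ℝ} (hρ0 : 0 < ρ) (hρ1 : ρ < 1) (hrρ : ∀ x, 0 < r x ∧ r x ≤ ρ)
  (hB : ∀ x, |b x| ≤ B) (hB0 : 0 ≤ B)
  (mk : Fin K → ℕ) (c : (k : Fin K) → Fin (mk k + 1) → Fin (n + 1)) (pk : Fin K → ℕ)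

include hd hdmem hbper hrper hbconst hrconst hρ0 hρ1 hrρ hB hB0 in
/-- bound on the jump of a partial sum at a point where `Xser` is left-continuous -/
lemma jump_bottom (z z₀ : ℝ) (M : ℤ) (hz : z = z₀ + M)
    (hcontz : Tendsto (Xser α b r) (𝓝[<] z₀) (𝓝 (Xser α b r z₀))) (m' : ℕ) :
    |SB α b r m' z - Function.leftLim (SB α b r m') z| ≤ 2 * (B * ρ ^ (m' + 1) / (1 - ρ)) := by
  have hXper := Xser_per' (α := α) hbper hrper
  have hXeq : ∀ w : ℝ, Xser α b r (w - M) = Xser α b r w := by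
    intro w
    have := per_int hXper (w - M) M
    simpa using this.symm
  -- X is left-continuous at z
  have hXz : Tendsto (Xser α b r) (𝓝[<] z) (𝓝 (Xser α b r z)) := by
    have hshift : Tendsto (fun w : ℝ => w - M) (𝓝[<] z) (𝓝[<] z₀) := by
      rw [tendsto_nhdsWithin_iff]
      constructor
      · have : Tendsto (fun w : ℝ => w - M) (𝓝 z) (𝓝 (z - M)) :=
          (continuous_sub_right (M : ℝ)).tendsto z
        rw [show z - (M : ℝ) = z₀ by rw [hz]; ring] at this
        exact tendsto_nhdsWithin_of_tendsto_nhds this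
      · filter_upwards [eventually_mem_nhdsWithin] with w hw
        have : w - (M : ℝ) < z - M := by exact sub_lt_sub_right hw _
        rw [show z - (M : ℝ) = z₀ by rw [hz]; ring] at this
        exact this
    have hcomp := hcontz.comp hshift
    have : Xser α b r z₀ = Xser α b r z := by
      rw [show z₀ = z - (M : ℝ) by rw [hz]; ring ]
      exact hXeq z
    rw [this] at hcomp
    apply hcomp.congr
    intro w
    exact hXeq w
  -- now the bound
  apply le_of_forall_pos_le_add
  intro ε hε
  have hev1 : ∀ᶠ w in 𝓝[<] z, |Xser α b r w - Xser α b r z| < ε := by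
    have := Metric.tendsto_nhds.mp hXz ε hε
    filter_upwards [this] with w hw
    rwa [Real.dist_eq] at hw
  have hev2 := leftS' d hd hdmem hbper hrper hbconst hrconst (α := α) m' z
  obtain ⟨w, hw1, hw2⟩ := (hev1.and hev2).exists
  have e1 := tail_bound' (α := α) hρ0 hρ1 hrρ hB m' z
  have e2 := tail_bound' (α := α) hρ0 hρ1 hrρ hB m' w
  rw [← hw2]
  calc |SB α b r m' z - SB α b r m' w|
      ≤ |SB α b r m' z - Xser α b r z| + |Xser α b r z - Xser α b r w|
        + |Xser α b r w - SB α b r m' w| := by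
        have := abs_sub_le (SB α b r m' z) (Xser α b r z) (SB α b r m' w)
        have h2 := abs_sub_le (Xser α b r z) (Xser α b r w) (SB α b r m' w)
        linarith
    _ ≤ B * ρ ^ (m' + 1) / (1 - ρ) + ε + B * ρ ^ (m' + 1) / (1 - ρ) := by
        have e1' : |SB α b r m' z - Xser α b r z| ≤ B * ρ ^ (m' + 1) / (1 - ρ) := by
          rw [abs_sub_comm]; exact e1
        have h3 : |Xser α b r z - Xser α b r w| ≤ ε := by
          rw [abs_sub_comm]; exact hw1.le
        gcongr
    _ = 2 * (B * ρ ^ (m' + 1) / (1 - ρ)) + ε := by ring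

include hirr hd hdmem hbper hrper hbconst hrconst hρ0 hρ1 hrρ hB hB0 in
/-- MAIN: `Xser` is constant on grid-free intervals -/
lemma key_const (hK : 0 < K)
    (hpart : ∀ j : Fin (n + 1), ∃! q : (Σ k : Fin K, Fin (mk k + 1)), c q.1 q.2 = j)
    (hchain : ∀ k : Fin K, ∀ i i' : Fin (mk k + 1),
      i ≤ i' ↔ ∃ p : ℕ, ∃ m : ℤ, d (c k i') = d (c k i) + p * α + m)
    (hpk : ∀ k : Fin K, ∃ m : ℤ,
      d (c k (Fin.last (mk k))) = d (c k 0) + (pk k) * α + m)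
    (hcont : ∀ k : Fin K,
      Tendsto (Xser α b r) (𝓝[<] (d (c k 0))) (𝓝 (Xser α b r (d (c k 0)))))
    (x y : ℝ) (hxy : x ≤ y)
    (hfree : ∀ z : ℝ, x < z → z ≤ y →
      ¬ ∃ k : Fin K, ∃ p : ℕ, p ≤ pk k ∧ ∃ m : ℤ, z = d (c k 0) + p * α + m) :
    Xser α b r x = Xser α b r y := by
  classical
  set X := Xser α b r with hX
  set E : ℕ → ℝ := fun m => B * ρ ^ (m + 1) / (1 - ρ) with hE
  have hE0 : ∀ m, 0 ≤ E m := by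
    intro m
    apply div_nonneg (mul_nonneg hB0 (pow_nonneg hρ0.le _))
    linarith
  set k₀ : Fin K := ⟨0, hK⟩ with hk₀
  -- y < x + 1
  have hy1 : y < x + 1 := by
    by_contra hcon
    push_neg at hcon
    obtain ⟨M, hM⟩ := rep_int x (d (c k₀ 0))
    exact hfree (rep x (d (c k₀ 0))) (rep_gt _ _) (le_trans (rep_le _ _) hcon)
      ⟨k₀, 0, by omega, M, by rw [hM]; push_cast; ring⟩
  -- the estimate for each level m
  have hbound : ∀ m : ℕ, |X y - X x| ≤ 2 * E m + ((n + 1) * (m + 1) : ℕ) * (2 * E m) := by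
    intro m
    set P : Finset ℝ :=
      ((Finset.univ : Finset (Fin (n + 1) × Fin (m + 1))).image
        (fun q => rep x (d q.1 - (q.2 : ℕ) * α))).filter (· ≤ y) with hP
    have hPsub : (↑P : Set ℝ) ⊆ Set.Ioc x y := by
      intro z hz
      simp only [hP, Finset.coe_filter, Set.mem_setOf_eq, Finset.mem_image, Finset.mem_univ,
        true_and] at hz
      obtain ⟨⟨q, hq⟩, hzy⟩ := hz
      exact ⟨hq ▸ rep_gt x _, hzy⟩
    -- the completeness of P : no 𝒟-point in shifted gaps
    have hPcompl : ∀ u v : ℝ, x ≤ u → u ≤ v → v ≤ y →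
        (∀ z ∈ Set.Ioc u v, z ∉ (P : Set ℝ)) →
        ∀ l : ℕ, l ≤ m → ∀ z : ℝ, u + l * α < z → z ≤ v + l * α → ¬ isD d z := by
      intro u v hu huv hv hnoP l hl z h1 h2 hDz
      obtain ⟨j, M, hjM⟩ := hDz
      set t : ℝ := z - l * α with ht
      have ht1 : u < t := by rw [ht]; linarith
      have ht2 : t ≤ v := by rw [ht]; linarith
      have htx : x < t := lt_of_le_of_lt hu ht1
      have hty : t ≤ y := le_trans ht2 hv
      have htrep : t = rep x (d j - l * α) := by
        apply rep_unique M
        · rw [ht, hjM]; ring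
        · exact htx
        · linarith
      have : t ∈ P := by
        rw [hP, Finset.mem_filter]
        constructor
        · rw [Finset.mem_image]
          exact ⟨(j, ⟨l, by omega⟩), Finset.mem_univ _, htrep.symm⟩
        · exact hty
      exact hnoP t ⟨ht1, ht2⟩ this
    -- telescoping
    have htele : SB α b r m y - SB α b r m x =
        ∑ z ∈ P, (SB α b r m z - Function.leftLim (SB α b r m) z) := by
      apply tele P (SB α b r m) x y hxy hPsub
      intro u v hu huv hv hnoP
      exact SB_step' d hd hdmem hbper hrper hbconst hrconst m u v huv
        (hPcompl u v hu huv hv hnoP)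
    -- individual jump bounds
    have hjump : ∀ z ∈ P, |SB α b r m z - Function.leftLim (SB α b r m) z| ≤ 2 * E m := by
      intro z hzP
      have hzIoc := hPsub hzP
      have hzgrid := hfree z hzIoc.1 hzIoc.2
      by_cases hhit : ∃ l : ℕ, l ≤ m ∧ isD d (z + l * α)
      · obtain ⟨l, hlm, hDl⟩ := hhit
        have hex : ∃ l : ℕ, isD d (z + l * α) := ⟨l, hDl⟩
        set l₀ := Nat.find hex with hl₀
        have hl₀D : isD d (z + l₀ * α) := Nat.find_spec hex
        have hl₀min : ∀ l' : ℕ, l' < l₀ → ¬ isD d (z + l' * α) := fun l' h => Nat.find_min hex h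
        have hl₀m : l₀ ≤ m := le_trans (Nat.find_min' hex hDl) hlm
        obtain ⟨k, M, hkM⟩ := class_bottom' hirr d mk c pk hchain hpk z hzgrid hpart l₀ hl₀D hl₀min
        have hmsplit : m = (m - l₀) + l₀ := by omega
        rw [hmsplit]
        rw [jump_prop_iter' d hd hdmem hbper hrper hbconst hrconst l₀ (m - l₀) z hl₀min]
        rw [abs_mul]
        obtain ⟨hprod0, hprodρ⟩ := prod_r_bound' (b := b) (B := B) hρ0 hrρ z l₀
        have hjb := jump_bottom d hd hdmem hbper hrper hbconst hrconst hρ0 hρ1 hrρ hB hB0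
          (z + l₀ * α) (d (c k 0)) M hkM (hcont k) (m - l₀)
        calc |∏ k' ∈ Finset.range l₀, r (z + k' * α)| *
            |SB α b r (m - l₀) (z + l₀ * α) -
              Function.leftLim (SB α b r (m - l₀)) (z + l₀ * α)|
            ≤ ρ ^ l₀ * (2 * (B * ρ ^ ((m - l₀) + 1) / (1 - ρ))) := by
              apply mul_le_mul _ hjb (abs_nonneg _) (pow_nonneg hρ0.le _)
              rw [abs_of_pos hprod0]
              exact hprodρ
          _ = 2 * E ((m - l₀) + l₀) := by
              simp only [hE]
              have hpow : ρ ^ l₀ * ρ ^ ((m - l₀) + 1) = ρ ^ (((m - l₀) + l₀) + 1) := by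
                rw [← pow_add]
                congr 1
                omega
              rw [div_eq_mul_inv, div_eq_mul_inv, ← hpow]
              ring
      · push_neg at hhit
        rw [jumpS_zero' d hd hdmem hbper hrper hbconst hrconst m z
          (fun l hl => hhit l hl)]
        rw [abs_zero]
        linarith [hE0 m]
    -- sum bound
    have hcard : P.card ≤ (n + 1) * (m + 1) := by
      calc P.card ≤ ((Finset.univ : Finset (Fin (n + 1) × Fin (m + 1))).image
            (fun q => rep x (d q.1 - (q.2 : ℕ) * α))).card := Finset.card_filter_le _ _
        _ ≤ (Finset.univ : Finset (Fin (n + 1) × Fin (m + 1))).card := Finset.card_image_le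
        _ = (n + 1) * (m + 1) := by simp
    have hsumb : |SB α b r m y - SB α b r m x| ≤ ((n + 1) * (m + 1) : ℕ) * (2 * E m) := by
      rw [htele]
      calc |∑ z ∈ P, (SB α b r m z - Function.leftLim (SB α b r m) z)|
          ≤ ∑ z ∈ P, |SB α b r m z - Function.leftLim (SB α b r m) z| :=
            Finset.abs_sum_le_sum_abs _ _
        _ ≤ P.card • (2 * E m) := Finset.sum_le_card_nsmul _ _ _ hjump
        _ = P.card * (2 * E m) := nsmul_eq_mul _ _
        _ ≤ ((n + 1) * (m + 1) : ℕ) * (2 * E m) := by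
            apply mul_le_mul_of_nonneg_right _ (by linarith [hE0 m])
            exact_mod_cast Nat.cast_le.mpr hcard
    -- assemble
    have t1 := tail_bound' (α := α) hρ0 hρ1 hrρ hB m y
    have t2 := tail_bound' (α := α) hρ0 hρ1 hrρ hB m x
    have habs : |X y - X x| ≤ |X y - SB α b r m y| + |SB α b r m y - SB α b r m x|
        + |SB α b r m x - X x| := by
      have h1 := abs_sub_le (X y) (SB α b r m y) (X x)
      have h2 := abs_sub_le (SB α b r m y) (SB α b r m x) (X x)
      linarith
    rw [← hX] at t1 t2
    have t2' : |SB α b r m x - X x| ≤ E m := by rw [abs_sub_comm]; exact t2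
    have hEm : E m = B * ρ ^ (m + 1) / (1 - ρ) := rfl
    rw [← hEm] at t1
    calc |X y - X x| ≤ E m + ((n + 1) * (m + 1) : ℕ) * (2 * E m) + E m := by
          refine le_trans habs ?_
          have := add_le_add (add_le_add t1 hsumb) t2'
          linarith
      _ = 2 * E m + ((n + 1) * (m + 1) : ℕ) * (2 * E m) := by ring
  -- the bound tends to zero
  have hlim : Tendsto (fun m : ℕ => 2 * E m + ((n + 1) * (m + 1) : ℕ) * (2 * E m))
      atTop (𝓝 0) := by
    have hc : ∀ m : ℕ, 2 * E m + ((n + 1) * (m + 1) : ℕ) * (2 * E m) =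
        (2 * (B * ρ / (1 - ρ))) * ρ ^ m
          + (2 * (B * ρ / (1 - ρ)) * ((n : ℝ) + 1)) * ((m : ℝ) * ρ ^ m)
          + (2 * (B * ρ / (1 - ρ)) * ((n : ℝ) + 1)) * ρ ^ m := by
      intro m
      rw [hE]
      push_cast
      have : ρ ^ (m + 1) = ρ * ρ ^ m := by rw [pow_succ]; ring
      rw [this]
      field_simp
      ring
    rw [show (0 : ℝ) = (2 * (B * ρ / (1 - ρ))) * 0
        + (2 * (B * ρ / (1 - ρ)) * ((n : ℝ) + 1)) * 0
        + (2 * (B * ρ / (1 - ρ)) * ((n : ℝ) + 1)) * 0 by ring]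
    apply Tendsto.congr (fun m => (hc m).symm)
    refine Tendsto.add (Tendsto.add ?_ ?_) ?_
    · exact (tendsto_pow_atTop_nhds_zero_of_lt_one hρ0.le hρ1).const_mul _
    · exact (tendsto_self_mul_const_pow_of_lt_one hρ0.le hρ1).const_mul _
    · exact (tendsto_pow_atTop_nhds_zero_of_lt_one hρ0.le hρ1).const_mul _
  have hfinal : |X y - X x| ≤ 0 := ge_of_tendsto' hlim hbound
  have := abs_nonpos_iff.mp hfinal
  linarith [sub_eq_zero.mp this]
end All

lemma arc_disjoint {n : ℕ} (d : Fin (n + 1) → ℝ) (hd : StrictMono d)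
    {i i' : Fin (n + 1)} (hne : i ≠ i') {t : ℝ} (ht : t ∈ arc d i) (ht' : t ∈ arc d i') :
    False := by
  rcases hne.lt_or_gt with h | h
  · have hnl : (i : ℕ) + 1 < n + 1 := by
      have := h
      rw [Fin.lt_def] at this
      omega
    have hend : t < d (i + 1) := by
      unfold arc at ht
      rw [if_neg (by omega)] at ht
      exact ht.2
    have hle : d (i + 1) ≤ d i' := by
      apply hd.monotone
      rw [Fin.le_def, fin_succ_val i hnl]
      rw [Fin.lt_def] at h
      omega
    unfold arc at ht'
    split_ifs at ht' with hsplit <;> linarith [ht'.1]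
  · have hnl : (i' : ℕ) + 1 < n + 1 := by
      have := h
      rw [Fin.lt_def] at this
      omega
    have hend : t < d (i' + 1) := by
      unfold arc at ht'
      rw [if_neg (by omega)] at ht'
      exact ht'.2
    have hle : d (i' + 1) ≤ d i := by
      apply hd.monotone
      rw [Fin.le_def, fin_succ_val i' hnl]
      rw [Fin.lt_def] at h
      omega
    unfold arc at ht
    split_ifs at ht with hsplit <;> linarith [ht.1]

/-- a periodic function constant on arcs is measurable -/
lemma meas_of_arc {n : ℕ} (d : Fin (n + 1) → ℝ) (hd : StrictMono d)
    (hdmem : ∀ i, d i ∈ Set.Ico (0 : ℝ) 1) {g : ℝ → ℝ}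
    (hgper : Function.Periodic g 1)
    (hgconst : ∀ i : Fin (n + 1), ∀ x ∈ arc d i, ∀ y ∈ arc d i, g x = g y) :
    Measurable g := by
  classical
  set T : ℝ → ℝ := fun x => Int.fract (x - d 0) + d 0 with hT
  set step : ℝ → ℝ := fun t => ∑ i : Fin (n + 1),
    Set.indicator (arc d i) (fun _ => g (d i)) t with hstep
  have hmeasT : Measurable T := (measurable_id.sub_const (d 0)).fract.add_const (d 0)
  have hmeasarc : ∀ i : Fin (n + 1), MeasurableSet (arc d i) := by
    intro i
    unfold arc
    split_ifs <;> exact measurableSet_Ico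
  have hmeasstep : Measurable step := by
    apply Finset.measurable_sum
    intro i _
    exact (measurable_const).indicator (hmeasarc i)
  have hkey : g = step ∘ T := by
    funext x
    set t : ℝ := T x with ht
    -- g t = g x
    have hfr : x = t + (⌊x - d 0⌋ : ℤ) := by
      rw [ht, hT]
      simp only
      rw [Int.fract]
      push_cast
      ring
    have hgt : g x = g t := by
      conv_lhs => rw [hfr]
      exact per_int hgper t _
    -- t lies in [d 0, d 0 + 1)
    have htmem : d 0 ≤ t ∧ t < d 0 + 1 := by
      rw [ht, hT]
      constructor
      · simp only [le_add_iff_nonneg_left]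
        exact Int.fract_nonneg _
      · have := Int.fract_lt_one (x - d 0)
        simp only
        linarith
    -- t is in some arc
    obtain ⟨i, m, hti, -⟩ := reduce d hd hdmem t t le_rfl
      (fun z h1 h2 => absurd (h1.trans_le h2) (lt_irrefl t))
    have hm0 : (m : ℝ) = 0 := by
      have h1 := arc_subset d hd hdmem i hti
      simp only [Set.mem_Ico] at h1
      have h2 : (m:ℝ) = t - (t - m) := by ring
      rw [h2]
      have hm1 : -1 < t - (t - (m:ℝ)) := by linarith [htmem.1, h1.2]
      have hm2 : t - (t - (m:ℝ)) < 1 := by linarith [htmem.2, h1.1]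
      have : (-1 : ℝ) < m := by linarith
      have h4 : (m : ℝ) < 1 := by linarith
      have h5 : -1 < m := by exact_mod_cast this
      have h6 : m < 1 := by exact_mod_cast h4
      have : m = 0 := by omega
      rw [this]; norm_num
    rw [hm0, sub_zero] at hti
    -- compute step t
    have hstept : step t = g (d i) := by
      rw [hstep]
      simp only
      rw [Finset.sum_eq_single i]
      · rw [Set.indicator_of_mem hti]
      · intro j _ hj
        rw [Set.indicator_of_notMem]
        intro htj
        exact arc_disjoint d hd hj htj hti
      · intro hh
        exact absurd (Finset.mem_univ i) hh
    have harcont := mem_arc_self d hd hdmem i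
    calc g x = g t := hgt
      _ = g (d i) := hgconst i t hti (d i) harcont
      _ = step t := hstept.symm
      _ = (step ∘ T) x := rfl
  rw [hkey]
  exact hmeasstep.comp hmeasT

lemma meas_X {α : ℝ} {b r : ℝ → ℝ} (hbm : Measurable b) (hrm : Measurable r)
    {ρ B : ℝ} (hρ0 : 0 < ρ) (hρ1 : ρ < 1) (hrρ : ∀ x, 0 < r x ∧ r x ≤ ρ)
    (hB : ∀ x, |b x| ≤ B) : Measurable (Xser α b r) := by
  have hfm : ∀ nn : ℕ, Measurable (fun x => fB α b r nn x) := by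
    intro nn
    apply Measurable.mul
    · apply Finset.measurable_prod
      intro k _
      exact hrm.comp (measurable_id.add_const _)
    · exact hbm.comp (measurable_id.add_const _)
  have hSm : ∀ m : ℕ, Measurable (SB α b r m) := by
    intro m
    apply Finset.measurable_sum
    intro nn _
    exact hfm nn
  apply measurable_of_tendsto_metrizable hSm
  rw [tendsto_pi_nhds]
  intro x
  have hsum := fB_summable' hρ0 hρ1 hrρ hB (α := α) x
  have h1 := hsum.hasSum.tendsto_sum_nat
  have h2 := h1.comp (tendsto_add_atTop_nat 1)
  have heq : (fun m : ℕ => ∑ i ∈ Finset.range (m + 1), fB α b r i x) =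
      fun m : ℕ => SB α b r m x := rfl
  have hXx : Xser α b r x = ∑' nn, fB α b r nn x := rfl
  rw [hXx]
  exact h2
end BremontAux

/-- If `X` is continuous at the bottom point `d_{0,k}` of every maximal chain, then `X` is
constant on each interval of the partition of the circle determined by the points
`T^p d_{0,k}`, `0 ≤ p ≤ p_k`; consequently `P_X` is purely atomic, supported by a finite set
with at most `∑_k (1 + p_k)` elements. -/
theorem continuity_implies_finitely_supported_law
    (α : ℝ) (hα : α ∈ Set.Ioo (0 : ℝ) 1) (hirr : Irrational α)
    (N : ℕ) [NeZero N] (d : Fin N → ℝ)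
    (hd : StrictMono d) (hdmem : ∀ i, d i ∈ Set.Ico (0 : ℝ) 1)
    (b r : ℝ → ℝ) (hbper : Function.Periodic b 1) (hrper : Function.Periodic r 1)
    (hr : ∀ x, r x ∈ Set.Ioo (0 : ℝ) 1)
    (hbconst : ∀ i : Fin N, ∀ x ∈ arc d i, ∀ y ∈ arc d i, b x = b y)
    (hrconst : ∀ i : Fin N, ∀ x ∈ arc d i, ∀ y ∈ arc d i, r x = r y)
    -- the decomposition of `{d_0,…,d_{N−1}}` into maximal chains
    (K : ℕ) (hK : 0 < K) (mk : Fin K → ℕ)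
    (c : (k : Fin K) → Fin (mk k + 1) → Fin N) (pk : Fin K → ℕ)
    (hpart : ∀ j : Fin N, ∃! q : (Σ k : Fin K, Fin (mk k + 1)), c q.1 q.2 = j)
    (hchain : ∀ k : Fin K, ∀ i i' : Fin (mk k + 1),
      i ≤ i' ↔ ∃ p : ℕ, ∃ m : ℤ, d (c k i') = d (c k i) + p * α + m)
    (hmax : ∀ k k' : Fin K, ∀ i : Fin (mk k + 1), ∀ i' : Fin (mk k' + 1),
      (∃ p : ℕ, ∃ m : ℤ, d (c k' i') = d (c k i) + p * α + m) → k = k')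
    (hpk : ∀ k : Fin K, ∃ m : ℤ,
      d (c k (Fin.last (mk k))) = d (c k 0) + (pk k) * α + m)
    -- `X` is continuous at every `d_{0,k}`
    (hcont : ∀ k : Fin K,
      Tendsto (Xser α b r) (𝓝[<] (d (c k 0))) (𝓝 (Xser α b r (d (c k 0))))) :
    -- `X` is constant on each interval of the partition determined by the `T^p d_{0,k}`
    (∀ x y : ℝ, x ≤ y →
      (∀ z : ℝ, x < z → z ≤ y →
        ¬ ∃ k : Fin K, ∃ p : ℕ, p ≤ pk k ∧ ∃ m : ℤ, z = d (c k 0) + p * α + m) →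
      Xser α b r x = Xser α b r y)
    -- `P_X` is purely atomic with at most `∑_k (1 + p_k)` atoms
    ∧ ∃ s : Finset ℝ, s.card ≤ ∑ k : Fin K, (1 + pk k) ∧
        Measure.map (Xser α b r) (volume.restrict (Set.Ico (0 : ℝ) 1)) ↑s = 1 := by
  classical
  obtain ⟨n, rfl⟩ : ∃ n, N = n + 1 :=
    ⟨N - 1, (Nat.succ_pred_eq_of_pos (Nat.pos_of_ne_zero (NeZero.ne N))).symm⟩
  -- uniform bounds on `r` and `b`
  set ρ : ℝ := Finset.univ.sup' Finset.univ_nonempty (fun i : Fin (n + 1) => r (d i)) with hρdef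
  have hρ0 : 0 < ρ :=
    lt_of_lt_of_le (hr (d 0)).1 (Finset.le_sup' (fun i : Fin (n + 1) => r (d i)) (Finset.mem_univ (0 : Fin (n + 1))))
  have hρ1 : ρ < 1 := by
    rw [hρdef, Finset.sup'_lt_iff]
    intro i _
    exact (hr (d i)).2
  have hrρ : ∀ x, 0 < r x ∧ r x ≤ ρ := by
    intro x
    refine ⟨(hr x).1, ?_⟩
    obtain ⟨i, hi⟩ := BremontAux.valEq d hd hdmem hrper hrconst x
    rw [hi]
    exact Finset.le_sup' (fun i : Fin (n + 1) => r (d i)) (Finset.mem_univ i)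
  set B : ℝ := Finset.univ.sup' Finset.univ_nonempty (fun i : Fin (n + 1) => |b (d i)|)
    with hBdef
  have hB : ∀ x, |b x| ≤ B := by
    intro x
    obtain ⟨i, hi⟩ := BremontAux.valEq d hd hdmem hbper hbconst x
    rw [hi]
    exact Finset.le_sup' (fun i : Fin (n + 1) => |b (d i)|) (Finset.mem_univ i)
  have hB0 : 0 ≤ B := le_trans (abs_nonneg _) (hB 0)
  -- the first conjunct
  have key := BremontAux.key_const hirr d hd hdmem hbper hrper hbconst hrconst
    hρ0 hρ1 hrρ hB hB0 mk c pk hK hpart hchain hpk hcont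
  refine ⟨key, ?_⟩
  -- the second conjunct
  haveI hQne : Nonempty ((k : Fin K) × Fin (pk k + 1)) := ⟨⟨⟨0, hK⟩, 0⟩⟩
  set s : Finset ℝ := Finset.image
    (fun q : (k : Fin K) × Fin (pk k + 1) => Xser α b r (d (c q.1 0) + (q.2 : ℕ) * α))
    Finset.univ with hsdef
  refine ⟨s, ?_, ?_⟩
  · calc s.card ≤ (Finset.univ : Finset ((k : Fin K) × Fin (pk k + 1))).card :=
        Finset.card_image_le
      _ = ∑ k : Fin K, (1 + pk k) := by
          rw [Finset.card_univ, Fintype.card_sigma]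
          apply Finset.sum_congr rfl
          intro k _
          simp [Fintype.card_fin]
          omega
  · -- every value of `Xser` lies in `s`
    have hall : ∀ x : ℝ, Xser α b r x ∈ s := by
      intro x
      set GR : Finset ℝ := Finset.image
        (fun q : (k : Fin K) × Fin (pk k + 1) =>
          BremontAux.rep (x - 1) (d (c q.1 0) + (q.2 : ℕ) * α)) Finset.univ with hGRdef
      have hGRne : GR.Nonempty := Finset.Nonempty.image Finset.univ_nonempty _
      set γ : ℝ := GR.max' hGRne with hγdef
      have hγmem : γ ∈ GR := GR.max'_mem hGRne
      obtain ⟨q, -, hq⟩ := Finset.mem_image.mp hγmem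
      have hγx : γ ≤ x := by
        rw [← hq]
        have := BremontAux.rep_le (x - 1) (d (c q.1 0) + (q.2 : ℕ) * α)
        linarith
      have hγgt : x - 1 < γ := by
        rw [← hq]
        exact BremontAux.rep_gt _ _
      have hfree : ∀ z : ℝ, γ < z → z ≤ x →
          ¬ ∃ k : Fin K, ∃ p : ℕ, p ≤ pk k ∧ ∃ m : ℤ, z = d (c k 0) + p * α + m := by
        rintro z h1 h2 ⟨k, p, hp, M, hM⟩
        have hzrep : z = BremontAux.rep (x - 1) (d (c k 0) + p * α) := by
          apply BremontAux.rep_unique M (by rw [hM])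
          · linarith
          · linarith
        have hzGR : z ∈ GR := by
          rw [hGRdef, Finset.mem_image]
          exact ⟨⟨k, ⟨p, by omega⟩⟩, Finset.mem_univ _, hzrep.symm⟩
        have := Finset.le_max' GR z hzGR
        rw [← hγdef] at this
        linarith
      have h1 : Xser α b r γ = Xser α b r x := key γ x hγx hfree
      obtain ⟨M, hM⟩ := BremontAux.rep_int (x - 1) (d (c q.1 0) + (q.2 : ℕ) * α)
      have h2 : Xser α b r γ = Xser α b r (d (c q.1 0) + (q.2 : ℕ) * α) := by
        have hγeq : γ = (d (c q.1 0) + (q.2 : ℕ) * α) + M := by rw [← hq, hM]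
        rw [hγeq]
        exact BremontAux.per_int (BremontAux.Xser_per hbper hrper) _ M
      rw [hsdef, Finset.mem_image]
      exact ⟨q, Finset.mem_univ q, by rw [← h2, h1]⟩
    have hbm : Measurable b := BremontAux.meas_of_arc d hd hdmem hbper hbconst
    have hrm : Measurable r := BremontAux.meas_of_arc d hd hdmem hrper hrconst
    have hXm : Measurable (Xser α b r) := BremontAux.meas_X hbm hrm hρ0 hρ1 hrρ hB
    rw [Measure.map_apply hXm s.measurableSet]
    have hpre : Xser α b r ⁻¹' ↑s = Set.univ := Set.eq_univ_iff_forall.mpr hall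
    rw [hpre, Measure.restrict_apply_univ]
    simp [Real.volume_Ico]
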